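/- arXiv:1711.01735 — 2 statements merged into one kernel-verified Lean document; each statement's English description precedes it below -/
import Mathlib

section
/- Strong gluing: suppose for each natural number y there is a non-deterministic flow of uniform length t from A(y) to A(y+1). Then for any s there is a non-deterministic flow of length s·(t+2) from A(0) to A(s), obtained by concatenating the s flows with the formulas A(y) inserted at positions y·(t+2). -/
/-- Strong Gluing (Lemma 2.24(ii), abstract form): given, for each `y`, a flow `H y`
of uniform length `t` from `A y` to `A (y+1)`, there is a flow `I` of length
`s * (t + 2)` from `A 0` to `A s`, with the formulas `A y` inserted at positions
`y * (t + 2)`. `Prov X Y` means `⊢ X → Y`. -/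
theorem strong_gluing {Formula : Type*} (Prov : Formula → Formula → Prop)
    (hrefl : ∀ X, Prov X X)
    (htrans : ∀ X Y Z, Prov X Y → Prov Y Z → Prov X Z)
    (A : ℕ → Formula) (t : ℕ) (H : ℕ → ℕ → Formula)
    (h0 : ∀ y, Prov (A y) (H y 0) ∧ Prov (H y 0) (A y))
    (ht : ∀ y, Prov (H y t) (A (y + 1)) ∧ Prov (A (y + 1)) (H y t))
    (hstep : ∀ y, ∀ u < t, Prov (H y u) (H y (u + 1)))
    (s : ℕ) :
    ∃ I : ℕ → Formula,
      (Prov (A 0) (I 0) ∧ Prov (I 0) (A 0)) ∧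
      (Prov (I (s * (t + 2))) (A s) ∧ Prov (A s) (I (s * (t + 2)))) ∧
      (∀ y ≤ s, I (y * (t + 2)) = A y) ∧
      (∀ u < s * (t + 2), Prov (I u) (I (u + 1))) := by
  refine ⟨fun u => if u % (t + 2) = 0 then A (u / (t + 2))
      else H (u / (t + 2)) (u % (t + 2) - 1), ?_, ?_, ?_, ?_⟩
  · simp [hrefl]
  · have h1 : (s * (t + 2)) % (t + 2) = 0 := Nat.mul_mod_left s (t + 2)
    have h2 : (s * (t + 2)) / (t + 2) = s := Nat.mul_div_cancel s (by omega)
    simp [h1, h2, hrefl]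
  · intro y hy
    have h1 : (y * (t + 2)) % (t + 2) = 0 := Nat.mul_mod_left y (t + 2)
    have h2 : (y * (t + 2)) / (t + 2) = y := Nat.mul_div_cancel y (by omega)
    simp [h1, h2]
  · intro u _
    have hr : u % (t + 2) < t + 2 := Nat.mod_lt _ (by omega)
    have key := Nat.div_add_mod u (t + 2)
    rcases Nat.lt_or_ge (u % (t + 2)) (t + 1) with hlt | hge
    · have hm : (u + 1) % (t + 2) = u % (t + 2) + 1 := by
        conv_lhs => rw [show u + 1 = (u % (t + 2) + 1) + (t + 2) * (u / (t + 2)) by omega]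
        rw [Nat.add_mul_mod_self_left, Nat.mod_eq_of_lt (by omega)]
      have hd : (u + 1) / (t + 2) = u / (t + 2) := by
        conv_lhs => rw [show u + 1 = (u % (t + 2) + 1) + (t + 2) * (u / (t + 2)) by omega]
        rw [Nat.add_mul_div_left _ _ (by omega : 0 < t + 2),
          Nat.div_eq_of_lt (by omega), Nat.zero_add]
      rcases Nat.eq_zero_or_pos (u % (t + 2)) with h0' | hpos
      · simp [h0', hm, hd]
        exact (h0 (u / (t + 2))).1
      · have hne : u % (t + 2) ≠ 0 := by omega
        simp [hne, hm, hd]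
        have h := hstep (u / (t + 2)) (u % (t + 2) - 1) (by omega)
        rwa [Nat.sub_add_cancel hpos] at h
    · have heq : u % (t + 2) = t + 1 := by omega
      have hu1 : u + 1 = (u / (t + 2) + 1) * (t + 2) := by
        rw [Nat.add_mul, Nat.mul_comm (u / (t + 2))]; omega
      have hm : (u + 1) % (t + 2) = 0 := by rw [hu1]; exact Nat.mul_mod_left _ _
      have hd : (u + 1) / (t + 2) = u / (t + 2) + 1 := by
        rw [hu1, Nat.mul_div_cancel _ (by omega)]
      have hne : u % (t + 2) ≠ 0 := by omega
      simp [hne, hm, hd, heq]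
      exact (ht (u / (t + 2))).1
end

section
/- Induction rule for flows in a distributive lattice: if for every y < s there is a flow (monotone finite chain) of uniform length t from (g ⊓ A y) ⊔ d to (g ⊓ A (y+1)) ⊔ d, then there is a flow of length s·(t+2) from (g ⊓ A 0) ⊔ d to (g ⊓ A s) ⊔ d; in particular there is a flow from g ⊓ A 0 to d ⊔ A s. -/
/-- Induction rule for flows in a distributive lattice (abstract Lemma 2.28(ii)):
if for every `y < s` there is a flow of uniform length `t` from `(g ⊓ A y) ⊔ d` to
`(g ⊓ A (y+1)) ⊔ d`, then there is a flow of length `s * (t + 2)` from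
`(g ⊓ A 0) ⊔ d` to `(g ⊓ A s) ⊔ d`; in particular there is a flow from `g ⊓ A 0`
to `d ⊔ A s`. -/
theorem induction_rule_flows {P : Type*} [DistribLattice P]
    (g d : P) (A : ℕ → P) (s t : ℕ) (H : ℕ → ℕ → P)
    (h0 : ∀ y < s, H y 0 = (g ⊓ A y) ⊔ d)
    (ht : ∀ y < s, H y t = (g ⊓ A (y + 1)) ⊔ d)
    (hstep : ∀ y < s, ∀ u < t, H y u ≤ H y (u + 1)) :
    (∃ I : ℕ → P,
      I 0 = (g ⊓ A 0) ⊔ d ∧ I (s * (t + 2)) = (g ⊓ A s) ⊔ d ∧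
      ∀ u < s * (t + 2), I u ≤ I (u + 1)) ∧
    (∃ (m : ℕ) (J : ℕ → P),
      J 0 = g ⊓ A 0 ∧ J m = d ⊔ A s ∧ ∀ u < m, J u ≤ J (u + 1)) := by
  set n := t + 2 with hn
  have hn2 : 0 < n := by omega
  set I : ℕ → P := fun u => if u < s * n then H (u / n) (min (u % n) t) else (g ⊓ A s) ⊔ d
    with hIdef
  have hI0 : I 0 = (g ⊓ A 0) ⊔ d := by
    rcases Nat.eq_zero_or_pos s with hs | hs
    · subst hs; simp [hIdef]
    · have : (0 : ℕ) < s * n := Nat.mul_pos hs hn2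
      simp [hIdef, this, h0 0 hs]
  have hIend : I (s * n) = (g ⊓ A s) ⊔ d := by simp [hIdef]
  have hstepI : ∀ u < s * n, I u ≤ I (u + 1) := by
    intro u hu
    set y := u / n with hy
    set r := u % n with hr
    have hys : y < s := by
      rw [hy]; exact Nat.div_lt_of_lt_mul (by rwa [mul_comm] at hu)
    have hrn : r < n := Nat.mod_lt _ hn2
    have hdm : y * n + r = u := by rw [mul_comm]; exact Nat.div_add_mod u n
    have hIu : I u = H y (min r t) := by simp [hIdef, hu, hy, hr]
    have hsucc : u + 1 = (r + 1) + y * n := by omega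
    have hdiv : (u + 1) / n = (r + 1) / n + y := by
      rw [hsucc, Nat.add_mul_div_right _ _ hn2]
    have hmod : (u + 1) % n = (r + 1) % n := by
      rw [hsucc, Nat.add_mul_mod_self_right]
    rcases lt_trichotomy r t with hrt | hrt | hrt
    · -- r < t : genuine step within block y
      have h1 : r + 1 < n := by omega
      have hlt : u + 1 < s * n := by
        rcases Nat.lt_or_ge (u + 1) (s * n) with h | h
        · exact h
        · exfalso
          have : u + 1 = s * n := by omega
          have : (u + 1) % n = 0 := by rw [this]; simp
          rw [hmod, Nat.mod_eq_of_lt h1] at this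
          omega
      have hIu1 : I (u + 1) = H ((u+1)/n) (min ((u+1) % n) t) := by simp [hIdef, hlt]
      rw [hIu, hIu1, hdiv, hmod, Nat.div_eq_of_lt h1, Nat.mod_eq_of_lt h1]
      simp only [Nat.zero_add]
      have : min r t = r := by omega
      rw [this]
      have : min (r + 1) t = r + 1 := by omega
      rw [this]
      exact hstep y hys r hrt
    · -- r = t : constant step
      have h1 : r + 1 < n := by omega
      have hlt : u + 1 < s * n := by
        rcases Nat.lt_or_ge (u + 1) (s * n) with h | h
        · exact h
        · exfalso
          have : u + 1 = s * n := by omega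
          have : (u + 1) % n = 0 := by rw [this]; simp
          rw [hmod, Nat.mod_eq_of_lt h1] at this
          omega
      have hIu1 : I (u + 1) = H ((u+1)/n) (min ((u+1) % n) t) := by simp [hIdef, hlt]
      rw [hIu, hIu1, hdiv, hmod, Nat.div_eq_of_lt h1, Nat.mod_eq_of_lt h1]
      simp only [Nat.zero_add]
      have e1 : min r t = t := by omega
      have e2 : min (r + 1) t = t := by omega
      rw [e1, e2]
    · -- r = t + 1 : block boundary
      have hr1 : r = t + 1 := by omega
      have h1 : r + 1 = n := by omega
      have hmul : (y + 1) * n = y * n + n := by ring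
      have hsucc' : u + 1 = (y + 1) * n := by omega
      have hIu' : I u = (g ⊓ A (y + 1)) ⊔ d := by
        rw [hIu]
        have : min r t = t := by omega
        rw [this, ht y hys]
      rcases Nat.lt_or_ge (u + 1) (s * n) with h | h
      · have hy1s : y + 1 < s := by
          by_contra hc
          have : s ≤ y + 1 := by omega
          have : s * n ≤ (y + 1) * n := Nat.mul_le_mul_right n this
          omega
        have hIu1 : I (u + 1) = H ((u+1)/n) (min ((u+1) % n) t) := by simp [hIdef, h]
        rw [hIu1, hdiv, hmod, h1]
        simp only [Nat.div_self hn2, Nat.mod_self, Nat.add_comm 1 y]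
        rw [show min 0 t = 0 by simp, h0 (y + 1) hy1s, hIu']
      · have heq : u + 1 = s * n := by omega
        have hys' : y + 1 = s := by
          have := hsucc'
          rw [heq] at this
          exact (Nat.eq_of_mul_eq_mul_right hn2 this.symm)
        rw [heq, hIend, hIu', hys']
  refine ⟨⟨I, hI0, hIend, hstepI⟩, s * n + 2,
    fun u => if u = 0 then g ⊓ A 0 else if u = s * n + 2 then d ⊔ A s else I (u - 1),
    by simp, by simp, ?_⟩
  intro u hu
  rcases Nat.eq_zero_or_pos u with rfl | hu0
  · simp only [if_pos rfl]
    have : ¬ (0 + 1 = s * n + 2) := by omega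
    simp only [Nat.zero_add, if_neg (by omega : (1:ℕ) ≠ 0), if_neg this]
    rw [show (1:ℕ) - 1 = 0 from rfl, hI0]
    exact le_sup_left
  rcases eq_or_lt_of_le (by omega : u + 1 ≤ s * n + 2) with heq | hlt
  · -- last step
    simp only [if_neg (by omega : u ≠ 0), if_neg (by omega : u ≠ s * n + 2), if_pos heq]
    have hu' : u - 1 = s * n := by omega
    rw [hu', hIend]
    exact sup_le (le_sup_of_le_right inf_le_right) le_sup_left
  · simp only [if_neg (by omega : u ≠ 0), if_neg (by omega : u ≠ s * n + 2),
      if_neg (by omega : u + 1 ≠ 0), if_neg (by omega : u + 1 ≠ s * n + 2)]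
    have h1 : u - 1 < s * n := by omega
    have h2 : u + 1 - 1 = (u - 1) + 1 := by omega
    rw [h2]
    exact hstepI (u - 1) h1
end
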